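/- Let g ≥ 2 and define B_n = (n + S_g) \ ⋃_{i=0}^{n−1} (i + S_g) for n ∈ ℕ. Then the sets B_n are pairwise disjoint and each B_n is infinite. -/

import Mathlib

/-- The generating set `S_g = {± g^k : k ∈ ℕ}` in `ℤ`. -/
def Sg (g : ℤ) : Set ℤ := {x | ∃ n : ℕ, x = g ^ n ∨ x = -g ^ n}

/-- `B n = (n + S_g) \ ⋃_{i < n} (i + S_g)`. -/
def Bset (g : ℤ) (n : ℕ) : Set ℤ :=
  ((fun s => (n : ℤ) + s) '' Sg g) \ ⋃ i ∈ Finset.range n, ((fun s => (i : ℤ) + s) '' Sg g)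

lemma key (g : ℤ) (hg : 2 ≤ g) (n i : ℕ) (hi : i < n) (a : ℕ) (ha : (n : ℤ) < g ^ a) :
    (n : ℤ) + g ^ a ∉ (fun s => (i : ℤ) + s) '' Sg g := by
  have hg0 : (0:ℤ) < g := by linarith
  have hin : (i : ℤ) < n := by exact_mod_cast hi
  rintro ⟨s, ⟨m, rfl | rfl⟩, h⟩
  · simp only at h
    have hpa : (0:ℤ) < g ^ a := pow_pos hg0 a
    have hlt : g ^ a < g ^ m := by linarith
    have hm : a < m := by
      by_contra hc
      push_neg at hc
      have := pow_le_pow_right₀ (by linarith : (1:ℤ) ≤ g) hc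
      linarith
    have h2 : g ^ (a + 1) ≤ g ^ m := pow_le_pow_right₀ (by linarith) hm
    have h3 : g ^ (a + 1) = g * g ^ a := by ring
    nlinarith
  · simp only at h
    have hpa : (0:ℤ) < g ^ a := pow_pos hg0 a
    have hpm : (0:ℤ) < g ^ m := pow_pos hg0 m
    linarith

lemma mem_Bset (g : ℤ) (hg : 2 ≤ g) (n j : ℕ) :
    (n : ℤ) + g ^ (j + n + 1) ∈ Bset g n := by
  have ha : (n : ℤ) < g ^ (j + n + 1) := by
    have h1 : (2:ℤ) ^ (j + n + 1) ≤ g ^ (j + n + 1) :=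
      pow_le_pow_left₀ (by norm_num) hg _
    have h2 : n < 2 ^ (j + n + 1) := by
      calc n < j + n + 1 := by omega
        _ < 2 ^ (j + n + 1) := Nat.lt_two_pow_self
    have h2' : (n : ℤ) < (2:ℤ) ^ (j + n + 1) := by exact_mod_cast h2
    linarith
  constructor
  · exact ⟨g ^ (j + n + 1), ⟨j + n + 1, Or.inl rfl⟩, rfl⟩
  · intro hx
    simp only [Set.mem_iUnion, Finset.mem_range] at hx
    obtain ⟨i, hi, hmem⟩ := hx
    exact key g hg n i hi _ ha hmem

theorem stmt_10 (g : ℤ) (hg : 2 ≤ g) :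
    (Pairwise fun n m => Disjoint (Bset g n) (Bset g m)) ∧ ∀ n, (Bset g n).Infinite := by
  constructor
  · have hmain : ∀ n m : ℕ, n < m → Disjoint (Bset g n) (Bset g m) := by
      intro n m hnm
      rw [Set.disjoint_left]
      rintro x ⟨hx1, _⟩ ⟨_, hx2⟩
      apply hx2
      simp only [Set.mem_iUnion, Finset.mem_range]
      exact ⟨n, hnm, hx1⟩
    intro n m hnm
    rcases lt_or_gt_of_ne hnm with h | h
    · exact hmain n m h
    · exact (hmain m n h).symm
  · intro n
    apply Set.infinite_of_injective_forall_mem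
      (f := fun j : ℕ => (n : ℤ) + g ^ (j + n + 1))
    · intro a b hab
      simp only [add_right_inj] at hab
      have hmono : StrictMono fun k : ℕ => g ^ k :=
        fun p q hpq => pow_lt_pow_right₀ (by linarith) hpq
      have := hmono.injective hab
      omega
    · intro j
      exact mem_Bset g hg n j
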